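/- Let p ≥ 2, let μ be the standard Gaussian measure on ℝ^p (the p-fold product of the real Gaussian N(0,1)), and let x, y ∈ ℝ^p be unit vectors. Then 2·∫ max(⟨w, x⟩, 0)·max(⟨w, y⟩, 0) dμ(w) = κ₁(⟨x, y⟩). -/

import Mathlib

open Real MeasureTheory ProbabilityTheory

noncomputable def kappa1 (u : ℝ) : ℝ :=
  (u * (π - Real.arccos u) + Real.sqrt (1 - u ^ 2)) / π

/-- The standard Gaussian measure on `ℝ^p`, the `p`-fold product of `N(0,1)`. -/
noncomputable def stdGaussian (p : ℕ) : Measure (EuclideanSpace ℝ (Fin p)) :=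
  (Measure.pi fun _ : Fin p => gaussianReal 0 1).map
    (MeasurableEquiv.toLp 2 (Fin p → ℝ))

open Filter
open scoped ENNReal NNReal RealInnerProductSpace

lemma lintegral_pi_prod {n : ℕ} (f : Fin n → ℝ → ℝ≥0∞) (hf : ∀ i, Measurable (f i)) :
    ∫⁻ v, ∏ i, f i (v i) ∂(Measure.pi fun _ : Fin n => (volume : Measure ℝ))
      = ∏ i, ∫⁻ t, f i t := by
  induction n with
  | zero => simp
  | succ n ih =>
    have h := measurePreserving_piFinSuccAbove (fun _ : Fin (n+1) => (volume : Measure ℝ)) 0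
    have hm : Measurable (fun y : ℝ × (Fin n → ℝ) => f 0 y.1 * ∏ j : Fin n, f j.succ (y.2 j)) :=
      ((hf 0).comp measurable_fst).mul
        (Finset.measurable_prod _ fun j _ => (hf j.succ).comp ((measurable_pi_apply j).comp measurable_snd))
    calc ∫⁻ v, ∏ i, f i (v i) ∂(Measure.pi fun _ : Fin (n+1) => (volume : Measure ℝ))
        = ∫⁻ v, (fun y : ℝ × (Fin n → ℝ) => f 0 y.1 * ∏ j : Fin n, f j.succ (y.2 j))
            ((MeasurableEquiv.piFinSuccAbove (fun _ => ℝ) 0) v)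
            ∂(Measure.pi fun _ : Fin (n+1) => (volume : Measure ℝ)) := by
          refine lintegral_congr fun v => ?_
          rw [Fin.prod_univ_succ]
          simp only [MeasurableEquiv.piFinSuccAbove, Fin.insertNthEquiv]
          rfl
      _ = ∫⁻ y, f 0 y.1 * ∏ j : Fin n, f j.succ (y.2 j)
            ∂((volume : Measure ℝ).prod (Measure.pi fun _ : Fin n => (volume : Measure ℝ))) :=
          h.lintegral_comp hm
      _ = (∫⁻ t, f 0 t) * ∏ j : Fin n, ∫⁻ t, f j.succ t := by
          have h2 := lintegral_prod_mul (μ := (volume : Measure ℝ))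
            (ν := Measure.pi fun _ : Fin n => (volume : Measure ℝ)) (f := f 0)
            (g := fun w => ∏ j : Fin n, f j.succ (w j)) (hf 0).aemeasurable
            (Finset.measurable_prod _ fun j _ => (hf j.succ).comp (measurable_pi_apply j)).aemeasurable
          exact h2.trans (by rw [ih (fun j => f j.succ) fun j => hf _])
      _ = ∏ i, ∫⁻ t, f i t := (Fin.prod_univ_succ fun i => ∫⁻ t, f i t).symm

lemma map_withDensity_equiv {α β : Type*} [MeasurableSpace α] [MeasurableSpace β]
    (μ : Measure α) (e : α ≃ᵐ β) {f : α → ℝ≥0∞} (hf : Measurable f) :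
    (μ.withDensity f).map e = (μ.map e).withDensity (fun y => f (e.symm y)) := by
  ext s hs
  rw [Measure.map_apply e.measurable hs, withDensity_apply _ (e.measurable hs),
    withDensity_apply _ hs,
    setLIntegral_map (f := fun y => f (e.symm y)) hs (hf.comp e.symm.measurable) e.measurable]
  simp only [MeasurableEquiv.symm_apply_apply]

lemma pi_gaussian_eq (p : ℕ) :
    (Measure.pi fun _ : Fin p => gaussianReal 0 1)
      = (Measure.pi fun _ : Fin p => (volume : Measure ℝ)).withDensity
          (fun v => ∏ i, gaussianPDF 0 1 (v i)) := by
  refine Measure.pi_eq fun s hs => ?_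
  rw [withDensity_apply _ (MeasurableSet.univ_pi hs),
    ← lintegral_indicator (MeasurableSet.univ_pi hs) _]
  have hind : ∀ v : Fin p → ℝ,
      (Set.univ.pi s).indicator (fun v => ∏ i, gaussianPDF 0 1 (v i)) v
        = ∏ i, (s i).indicator (gaussianPDF 0 1) (v i) := by
    intro v
    by_cases hv : v ∈ Set.univ.pi s
    · rw [Set.indicator_of_mem hv]
      exact Finset.prod_congr rfl fun i _ =>
        (Set.indicator_of_mem (hv i (Set.mem_univ i)) _).symm
    · rw [Set.indicator_of_notMem hv]
      rw [Set.mem_univ_pi] at hv; push_neg at hv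
      obtain ⟨i, hi⟩ := hv
      exact (Finset.prod_eq_zero (Finset.mem_univ i)
        (Set.indicator_of_notMem hi _)).symm
  simp_rw [hind]
  rw [lintegral_pi_prod _ (fun i => (measurable_gaussianPDF 0 1).indicator (hs i))]
  refine Finset.prod_congr rfl fun i _ => ?_
  rw [lintegral_indicator (hs i) _, gaussianReal_apply 0 one_ne_zero (s i)]

lemma stdGaussian_eq_withDensity (p : ℕ) :
    stdGaussian p = (volume : Measure (EuclideanSpace ℝ (Fin p))).withDensity
      (fun w => ∏ i, gaussianPDF 0 1 (w i)) := by
  rw [_root_.stdGaussian, pi_gaussian_eq,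
    map_withDensity_equiv _ (MeasurableEquiv.toLp 2 (Fin p → ℝ))
      (show Measurable fun v : Fin p → ℝ => ∏ i, gaussianPDF 0 1 (v i) from
        Finset.measurable_prod _ fun i _ =>
          (measurable_gaussianPDF 0 1).comp (measurable_pi_apply i))]
  congr 1
  rw [show (Measure.pi fun _ : Fin p => (volume : Measure ℝ)) = volume from volume_pi.symm]
  exact ((EuclideanSpace.volume_preserving_symm_measurableEquiv_toLp (ι := Fin p)).symm
    (MeasurableEquiv.toLp 2 (Fin p → ℝ)).symm).map_eq

lemma prod_gaussianPDF_eq (p : ℕ) (w : EuclideanSpace ℝ (Fin p)) :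
    (∏ i, gaussianPDF 0 1 (w i))
      = ENNReal.ofReal ((√(2 * π))⁻¹ ^ p * rexp (-‖w‖ ^ 2 / 2)) := by
  rw [show (∏ i, gaussianPDF 0 1 (w i))
      = ENNReal.ofReal (∏ i, gaussianPDFReal 0 1 (w i)) from
    (ENNReal.ofReal_prod_of_nonneg fun i _ => gaussianPDFReal_nonneg 0 1 (w i)).symm]
  congr 1
  have : ∀ i, gaussianPDFReal 0 1 (w i) = (√(2 * π))⁻¹ * rexp (-(w i) ^ 2 / 2) := by
    intro i
    simp [gaussianPDFReal]
  simp_rw [this]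
  rw [Finset.prod_mul_distrib, Finset.prod_const, ← Real.exp_sum]
  congr 2
  · simp
  rw [EuclideanSpace.norm_eq, Real.sq_sqrt (by positivity)]
  rw [← Finset.sum_div, ← Finset.sum_neg_distrib]
  congr 1
  exact Finset.sum_congr rfl fun i _ => by rw [Real.norm_eq_abs, sq_abs]

lemma stdGaussian_map_isometry (p : ℕ)
    (L : EuclideanSpace ℝ (Fin p) ≃ₗᵢ[ℝ] EuclideanSpace ℝ (Fin p)) :
    (stdGaussian p).map L = stdGaussian p := by
  rw [stdGaussian_eq_withDensity]
  simp_rw [prod_gaussianPDF_eq]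
  have hmeas : Measurable fun w : EuclideanSpace ℝ (Fin p) =>
      ENNReal.ofReal ((√(2 * π))⁻¹ ^ p * rexp (-‖w‖ ^ 2 / 2)) := by
    fun_prop
  rw [show ⇑L = ⇑L.toMeasurableEquiv from rfl,
    map_withDensity_equiv _ L.toMeasurableEquiv hmeas]
  rw [show Measure.map (⇑L.toMeasurableEquiv) volume = volume from L.measurePreserving.map_eq]
  congr 1
  funext y
  rw [show L.toMeasurableEquiv.symm y = L.symm y from rfl, LinearIsometryEquiv.norm_map L.symm y]

lemma pi_map_pair (p : ℕ) (i₀ i₁ : Fin p) (hne : i₀ ≠ i₁) :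
    (Measure.pi fun _ : Fin p => gaussianReal 0 1).map (fun v => (v i₀, v i₁))
      = (gaussianReal 0 1).prod (gaussianReal 0 1) := by
  classical
  refine (Measure.prod_eq fun s t hs ht => ?_).symm
  rw [Measure.map_apply ((measurable_pi_apply i₀).prodMk (measurable_pi_apply i₁))
    (hs.prod ht)]
  have hpre : (fun v : Fin p → ℝ => (v i₀, v i₁)) ⁻¹' (s ×ˢ t)
      = Set.univ.pi (fun i => if i = i₀ then s else if i = i₁ then t else Set.univ) := by
    ext v
    simp only [Set.mem_preimage, Set.mem_prod, Set.mem_univ_pi]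
    constructor
    · rintro ⟨h1, h2⟩ i
      split_ifs with h h'
      · subst h; exact h1
      · subst h'; exact h2
      · trivial
    · intro h
      refine ⟨?_, ?_⟩
      · have := h i₀; simpa using this
      · have := h i₁; simpa [if_neg (Ne.symm hne)] using this
  rw [hpre, Measure.pi_pi]
  rw [← Finset.prod_subset (Finset.subset_univ ({i₀, i₁} : Finset (Fin p)))
    (fun i _ hi => ?_), Finset.prod_pair hne]
  · simp [if_neg (Ne.symm hne)]
  · simp only [Finset.mem_insert, Finset.mem_singleton, not_or] at hi
    rw [if_neg hi.1, if_neg hi.2]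
    simp

lemma gaussian_prod_eq :
    (gaussianReal 0 1).prod (gaussianReal 0 1)
      = ((volume : Measure ℝ).prod (volume : Measure ℝ)).withDensity
          (fun q => gaussianPDF 0 1 q.1 * gaussianPDF 0 1 q.2) := by
  refine Measure.prod_eq fun s t hs ht => ?_
  rw [withDensity_apply _ (hs.prod ht), ← Measure.prod_restrict,
    lintegral_prod_mul ((measurable_gaussianPDF 0 1).aemeasurable)
      ((measurable_gaussianPDF 0 1).aemeasurable),
    gaussianReal_apply 0 one_ne_zero s, gaussianReal_apply 0 one_ne_zero t]

lemma radial_integral : ∫ r in Set.Ioi (0:ℝ), r ^ 3 * rexp (-r ^ 2 / 2) = 2 := by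
  have hderiv : ∀ r ∈ Set.Ioi (0:ℝ),
      HasDerivAt (fun r : ℝ => -((r ^ 2 + 2) * rexp (-r ^ 2 / 2)))
        (r ^ 3 * rexp (-r ^ 2 / 2)) r := by
    intro r _
    have h1 : HasDerivAt (fun r : ℝ => r ^ 2 + 2) (2 * r) r := by
      simpa using (hasDerivAt_pow 2 r).add_const 2
    have h2 : HasDerivAt (fun r : ℝ => -r ^ 2 / 2) (-r) r := by
      have := ((hasDerivAt_pow 2 r).neg).div_const 2
      simpa using this.congr_deriv (by ring)
    have h3 := h2.exp
    have h4 := (h1.mul h3).neg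
    exact h4.congr_deriv (by ring)
  have hcont : ContinuousWithinAt (fun r : ℝ => -((r ^ 2 + 2) * rexp (-r ^ 2 / 2)))
      (Set.Ici 0) 0 := by
    apply Continuous.continuousWithinAt
    fun_prop
  have hpos : ∀ r ∈ Set.Ioi (0:ℝ), 0 ≤ r ^ 3 * rexp (-r ^ 2 / 2) := by
    intro r hr
    have : (0:ℝ) < r := hr
    positivity
  have htend : Tendsto (fun r : ℝ => -((r ^ 2 + 2) * rexp (-r ^ 2 / 2))) atTop (nhds 0) := by
    have base : Tendsto (fun t : ℝ => -((2 * t + 2) * rexp (-t))) atTop (nhds 0) := by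
      have b1 : Tendsto (fun t : ℝ => t * rexp (-t)) atTop (nhds 0) := by
        simpa using Real.tendsto_pow_mul_exp_neg_atTop_nhds_zero 1
      have b2 : Tendsto (fun t : ℝ => rexp (-t)) atTop (nhds 0) :=
        Real.tendsto_exp_neg_atTop_nhds_zero
      have := ((b1.const_mul 2).add (b2.const_mul 2)).neg
      simpa using this.congr (by intro t; ring)
    have hcomp : Tendsto (fun r : ℝ => r ^ 2 / 2) atTop atTop :=
      (tendsto_pow_atTop (two_ne_zero)).atTop_div_const (by norm_num)
    have := base.comp hcomp
    simpa using this.congr (by intro r; simp; ring_nf)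
  have := integral_Ioi_of_hasDerivAt_of_nonneg hcont hderiv hpos htend
  rw [this]
  norm_num

lemma angular_pointwise (u : ℝ) (hu1 : -1 ≤ u) (hu2 : u ≤ 1) (θ : ℝ)
    (hθ : θ ∈ Set.Ioo (-π) π) :
    max (cos θ) 0 * max (cos (θ - arccos u)) 0
      = (Set.Ioo (arccos u - π/2) (π/2)).indicator
          (fun θ => cos θ * cos (θ - arccos u)) θ := by
  set t := arccos u with ht
  have ht0 : 0 ≤ t := arccos_nonneg u
  have htpi : t ≤ π := arccos_le_pi u
  by_cases hmem : θ ∈ Set.Ioo (t - π/2) (π/2)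
  · rw [Set.indicator_of_mem hmem]
    have hc1 : 0 < cos θ := by
      apply cos_pos_of_mem_Ioo
      constructor
      · linarith [hmem.1]
      · exact hmem.2
    have hc2 : 0 < cos (θ - t) := by
      apply cos_pos_of_mem_Ioo
      constructor
      · linarith [hmem.1]
      · linarith [hmem.2]
    rw [max_eq_left hc1.le, max_eq_left hc2.le]
  · rw [Set.indicator_of_notMem hmem]
    rw [Set.mem_Ioo, not_and_or, not_lt, not_lt] at hmem
    rcases hmem with h | h
    · -- θ ≤ t - π/2
      by_cases hhalf : θ ≤ -(π/2)
      · have : cos θ ≤ 0 := by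
          have := cos_nonpos_of_pi_div_two_le_of_le (x := -θ) (by linarith) (by linarith [hθ.1])
          rwa [cos_neg] at this
        rw [max_eq_right this, zero_mul]
      · push_neg at hhalf
        have : cos (θ - t) ≤ 0 := by
          have := cos_nonpos_of_pi_div_two_le_of_le (x := -(θ - t)) (by linarith) (by linarith)
          rwa [cos_neg] at this
        rw [max_eq_right this, mul_zero]
    · -- π/2 ≤ θ
      have : cos θ ≤ 0 :=
        cos_nonpos_of_pi_div_two_le_of_le h (by linarith [hθ.2])
      rw [max_eq_right this, zero_mul]

lemma angular_integral (u : ℝ) (hu1 : -1 ≤ u) (hu2 : u ≤ 1) :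
    ∫ θ in Set.Ioo (-π) π, max (cos θ) 0 * max (cos (θ - arccos u)) 0
      = (√(1 - u ^ 2) + (π - arccos u) * u) / 2 := by
  set t := arccos u with ht
  have ht0 : 0 ≤ t := arccos_nonneg u
  have htpi : t ≤ π := arccos_le_pi u
  have hpi := pi_pos
  rw [setIntegral_congr_fun measurableSet_Ioo
    (fun θ hθ => angular_pointwise u hu1 hu2 θ hθ)]
  rw [setIntegral_indicator measurableSet_Ioo]
  have hsub : Set.Ioo (-π) π ∩ Set.Ioo (t - π/2) (π/2) = Set.Ioo (t - π/2) (π/2) :=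
    Set.inter_eq_self_of_subset_right (Set.Ioo_subset_Ioo (by linarith) (by linarith))
  rw [hsub, ← integral_Ioc_eq_integral_Ioo,
    ← intervalIntegral.integral_of_le (by linarith : t - π/2 ≤ π/2)]
  have hderiv : ∀ θ ∈ Set.uIcc (t - π/2) (π/2),
      HasDerivAt (fun θ : ℝ => (sin (2*θ - t) / 2 + θ * u) / 2)
        (cos θ * cos (θ - t)) θ := by
    intro θ _
    have h1 : HasDerivAt (fun θ : ℝ => 2*θ - t) 2 θ := by
      simpa using ((hasDerivAt_id θ).const_mul 2).sub_const t
    have h2 := h1.sin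
    have h3 := ((h2.div_const 2).add ((hasDerivAt_id θ).mul_const u)).div_const 2
    refine h3.congr_deriv ?_
    have e1 : 2*θ - t = θ + (θ - t) := by ring
    have e2 : cos t = cos θ * cos (θ - t) + sin θ * sin (θ - t) := by
      have h := Real.cos_sub θ (θ - t)
      rw [show θ - (θ - t) = t by ring] at h
      exact h
    have hcu : cos t = u := cos_arccos hu1 hu2
    rw [e1, Real.cos_add]
    rw [hcu] at e2
    linarith [e2]
  rw [intervalIntegral.integral_eq_sub_of_hasDerivAt hderiv
    ((Continuous.intervalIntegrable (by fun_prop) _ _))]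
  have hs1 : sin (2 * (π/2) - t) = sin t := by
    rw [show 2 * (π/2) - t = π - t by ring, sin_pi_sub]
  have hs2 : sin (2 * (t - π/2) - t) = -sin t := by
    rw [show 2 * (t - π/2) - t = t - π by ring, Real.sin_sub_pi]
  have hsin : sin t = √(1 - u ^ 2) := sin_arccos u
  rw [hs1, hs2, hsin]
  ring

lemma gaussian2D (u : ℝ) (hu1 : -1 ≤ u) (hu2 : u ≤ 1) :
    ∫ q : ℝ × ℝ, max q.1 0 * max (u * q.1 + √(1 - u ^ 2) * q.2) 0
        ∂((gaussianReal 0 1).prod (gaussianReal 0 1)) = kappa1 u / 2 := by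
  have hpi := pi_pos
  rw [gaussian_prod_eq]
  have hd : (fun q : ℝ × ℝ => gaussianPDF 0 1 q.1 * gaussianPDF 0 1 q.2)
      = fun q : ℝ × ℝ =>
        ((gaussianPDFReal 0 1 q.1 * gaussianPDFReal 0 1 q.2).toNNReal : ℝ≥0∞) := by
    funext q
    rw [gaussianPDF_def, ← ENNReal.ofReal_mul (gaussianPDFReal_nonneg 0 1 q.1)]
    rfl
  have hm : Measurable fun q : ℝ × ℝ =>
      (gaussianPDFReal 0 1 q.1 * gaussianPDFReal 0 1 q.2).toNNReal :=
    (((measurable_gaussianPDFReal 0 1).comp measurable_fst).mul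
      ((measurable_gaussianPDFReal 0 1).comp measurable_snd)).real_toNNReal
  rw [hd, integral_withDensity_eq_integral_smul hm]
  have hsmul : ∀ q : ℝ × ℝ,
      (gaussianPDFReal 0 1 q.1 * gaussianPDFReal 0 1 q.2).toNNReal
        • (max q.1 0 * max (u * q.1 + √(1 - u ^ 2) * q.2) 0)
      = gaussianPDFReal 0 1 q.1 * gaussianPDFReal 0 1 q.2 *
          (max q.1 0 * max (u * q.1 + √(1 - u ^ 2) * q.2) 0) := by
    intro q
    rw [NNReal.smul_def, Real.coe_toNNReal _
      (mul_nonneg (gaussianPDFReal_nonneg 0 1 q.1) (gaussianPDFReal_nonneg 0 1 q.2)),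
      smul_eq_mul]
  simp_rw [hsmul]
  rw [← Measure.volume_eq_prod, ← integral_comp_polarCoord_symm]
  have htgt : polarCoord.target = Set.Ioi (0:ℝ) ×ˢ Set.Ioo (-π) π := rfl
  rw [htgt]
  have hpdf : ∀ a : ℝ, gaussianPDFReal 0 1 a = (√(2 * π))⁻¹ * rexp (-a ^ 2 / 2) := by
    intro a; simp [gaussianPDFReal]
  have hpoint : ∀ p : ℝ × ℝ, p ∈ Set.Ioi (0:ℝ) ×ˢ Set.Ioo (-π) π →
      p.1 • (gaussianPDFReal 0 1 (polarCoord.symm p).1 *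
          gaussianPDFReal 0 1 (polarCoord.symm p).2 *
          (max (polarCoord.symm p).1 0 *
            max (u * (polarCoord.symm p).1 + √(1 - u ^ 2) * (polarCoord.symm p).2) 0))
      = ((2 * π)⁻¹ * (p.1 ^ 3 * rexp (-p.1 ^ 2 / 2))) *
          (max (cos p.2) 0 * max (cos (p.2 - arccos u)) 0) := by
    rintro ⟨r, θ⟩ ⟨hr, hθ⟩
    have hr' : (0:ℝ) < r := hr
    have h1 : (polarCoord.symm (r, θ)).1 = r * cos θ := rfl
    have h2 : (polarCoord.symm (r, θ)).2 = r * sin θ := rfl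
    rw [h1, h2, hpdf, hpdf]
    have hprod : (√(2 * π))⁻¹ * rexp (-(r * cos θ) ^ 2 / 2) *
        ((√(2 * π))⁻¹ * rexp (-(r * sin θ) ^ 2 / 2))
        = (2 * π)⁻¹ * rexp (-r ^ 2 / 2) := by
      have e1 : -(r * cos θ) ^ 2 / 2 + -(r * sin θ) ^ 2 / 2 = -r ^ 2 / 2 := by
        linear_combination (-(r ^ 2) / 2) * (Real.sin_sq_add_cos_sq θ)
      have e2 : (√(2 * π))⁻¹ * (√(2 * π))⁻¹ = (2 * π)⁻¹ := by
        rw [← mul_inv, Real.mul_self_sqrt (by positivity)]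
      calc (√(2 * π))⁻¹ * rexp (-(r * cos θ) ^ 2 / 2) *
            ((√(2 * π))⁻¹ * rexp (-(r * sin θ) ^ 2 / 2))
          = (√(2 * π))⁻¹ * (√(2 * π))⁻¹ *
            (rexp (-(r * cos θ) ^ 2 / 2) * rexp (-(r * sin θ) ^ 2 / 2)) := by ring
        _ = (2 * π)⁻¹ * rexp (-r ^ 2 / 2) := by
            rw [← Real.exp_add, e1, e2]
    have hmax1 : max (r * cos θ) 0 = r * max (cos θ) 0 := by
      rw [mul_max_of_nonneg _ _ hr'.le, mul_zero]
    have hmax2 : max (u * (r * cos θ) + √(1 - u ^ 2) * (r * sin θ)) 0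
        = r * max (cos (θ - arccos u)) 0 := by
      rw [mul_max_of_nonneg _ _ hr'.le, mul_zero]
      congr 1
      rw [Real.cos_sub, cos_arccos hu1 hu2, sin_arccos]
      ring
    rw [hmax1, hmax2, smul_eq_mul]
    calc r * ((√(2 * π))⁻¹ * rexp (-(r * cos θ) ^ 2 / 2) *
          ((√(2 * π))⁻¹ * rexp (-(r * sin θ) ^ 2 / 2)) *
          (r * max (cos θ) 0 * (r * max (cos (θ - arccos u)) 0)))
        = (√(2 * π))⁻¹ * rexp (-(r * cos θ) ^ 2 / 2) *
          ((√(2 * π))⁻¹ * rexp (-(r * sin θ) ^ 2 / 2)) *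
          (r ^ 3 * (max (cos θ) 0 * max (cos (θ - arccos u)) 0)) := by ring
      _ = (2 * π)⁻¹ * rexp (-r ^ 2 / 2) *
          (r ^ 3 * (max (cos θ) 0 * max (cos (θ - arccos u)) 0)) := by rw [hprod]
      _ = ((2 * π)⁻¹ * (r ^ 3 * rexp (-r ^ 2 / 2))) *
          (max (cos θ) 0 * max (cos (θ - arccos u)) 0) := by ring
  rw [setIntegral_congr_fun (measurableSet_Ioi.prod measurableSet_Ioo) hpoint]
  rw [Measure.volume_eq_prod, ← Measure.prod_restrict]
  have hsep := MeasureTheory.integral_prod_mul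
    (μ := (volume : Measure ℝ).restrict (Set.Ioi 0))
    (ν := (volume : Measure ℝ).restrict (Set.Ioo (-π) π))
    (f := fun r : ℝ => (2 * π)⁻¹ * (r ^ 3 * rexp (-r ^ 2 / 2)))
    (g := fun θ : ℝ => max (cos θ) 0 * max (cos (θ - arccos u)) 0)
  rw [hsep, integral_const_mul, radial_integral, angular_integral u hu1 hu2]
  rw [kappa1]
  field_simp
  ring

lemma exists_good_basis (p : ℕ) (x y : EuclideanSpace ℝ (Fin p)) (hx : ‖x‖ = 1)
    (hy : ‖y‖ = 1) (i₀ i₁ : Fin p) (hne : i₀ ≠ i₁) :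
    ∃ B : OrthonormalBasis (Fin p) ℝ (EuclideanSpace ℝ (Fin p)), B i₀ = x ∧
      y = (inner ℝ x y : ℝ) • x + √(1 - (inner ℝ x y : ℝ) ^ 2) • B i₁ := by
  classical
  set u : ℝ := inner ℝ x y with hu
  set z : EuclideanSpace ℝ (Fin p) := y - u • x with hzdef
  have hxx : (inner ℝ x x : ℝ) = 1 := by
    rw [real_inner_self_eq_norm_sq, hx]; norm_num
  have hxz : (inner ℝ x z : ℝ) = 0 := by
    rw [hzdef, inner_sub_right, real_inner_smul_right, hxx]
    simp [hu]
  have hz2 : ‖z‖ ^ 2 = 1 - u ^ 2 := by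
    have h := norm_sub_sq_real y (u • x)
    rw [real_inner_smul_right, norm_smul, hx, hy] at h
    rw [hzdef, h, real_inner_comm, ← hu]
    simp [Real.norm_eq_abs, sq_abs]
    ring
  have card : Module.finrank ℝ (EuclideanSpace ℝ (Fin p)) = Fintype.card (Fin p) := by
    simp
  by_cases h0 : z = 0
  · have h1 : (1 : ℝ) - u ^ 2 = 0 := by rw [← hz2, h0]; simp
    have horth : Orthonormal ℝ (({i₀} : Set (Fin p)).restrict fun _ => x) := by
      rw [orthonormal_iff_ite]
      rintro ⟨i, hi⟩ ⟨j, hj⟩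
      simp only [Set.mem_singleton_iff] at hi hj
      subst hi; subst hj
      rw [if_pos rfl]
      exact hxx
    obtain ⟨B, hB⟩ := horth.exists_orthonormalBasis_extension_of_card_eq card
    refine ⟨B, hB i₀ rfl, ?_⟩
    rw [h1, Real.sqrt_zero, zero_smul, add_zero]
    have : y - u • x = 0 := h0
    rw [sub_eq_zero] at this
    exact this
  · have hzn : ‖z‖ = √(1 - u ^ 2) := by rw [← hz2, Real.sqrt_sq (norm_nonneg z)]
    have hznz : ‖z‖ ≠ 0 := fun h => h0 (norm_eq_zero.mp h)
    set v : Fin p → EuclideanSpace ℝ (Fin p) := fun i => if i = i₀ then x else ‖z‖⁻¹ • z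
      with hv
    have hvnorm : (inner ℝ (‖z‖⁻¹ • z) (‖z‖⁻¹ • z) : ℝ) = 1 := by
      rw [real_inner_smul_right, real_inner_smul_left, real_inner_self_eq_norm_sq]
      field_simp
    have hvx : (inner ℝ x (‖z‖⁻¹ • z) : ℝ) = 0 := by
      rw [real_inner_smul_right, hxz, mul_zero]
    have horth : Orthonormal ℝ (({i₀, i₁} : Set (Fin p)).restrict v) := by
      rw [orthonormal_iff_ite]
      rintro ⟨i, hi⟩ ⟨j, hj⟩
      simp only [Set.mem_insert_iff, Set.mem_singleton_iff] at hi hj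
      dsimp only [Set.restrict, Set.domRestrict]
      have hij : ((⟨i, by simpa using hi⟩ : ({i₀, i₁} : Set (Fin p)))
          = ⟨j, by simpa using hj⟩) ↔ i = j := by
        constructor
        · intro h; exact congrArg Subtype.val h
        · intro h; exact Subtype.ext h
      rcases hi with rfl | rfl <;> rcases hj with rfl | rfl
      · rw [if_pos rfl]
        simp only [hv, if_pos rfl]
        exact hxx
      · rw [if_neg (by simp [hij]; exact hne)]
        simp only [hv, if_pos rfl, if_neg (Ne.symm hne)]
        exact hvx
      · rw [if_neg (by simp [hij]; exact Ne.symm hne)]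
        simp only [hv, if_pos rfl, if_neg (Ne.symm hne)]
        rw [real_inner_comm]
        exact hvx
      · rw [if_pos rfl]
        simp only [hv, if_neg (Ne.symm hne)]
        exact hvnorm
    obtain ⟨B, hB⟩ := horth.exists_orthonormalBasis_extension_of_card_eq card
    have hB0 : B i₀ = x := by
      have := hB i₀ (by simp)
      simpa [hv] using this
    have hB1 : B i₁ = ‖z‖⁻¹ • z := by
      have := hB i₁ (by simp)
      simpa [hv, if_neg (Ne.symm hne)] using this
    refine ⟨B, hB0, ?_⟩
    rw [hB1, ← hzn, smul_smul, mul_inv_cancel₀ hznz, one_smul, hzdef]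
    abel

theorem arc_cosine_one_kernel (p : ℕ) (hp : 2 ≤ p)
    (x y : EuclideanSpace ℝ (Fin p)) (hx : ‖x‖ = 1) (hy : ‖y‖ = 1) :
    2 * ∫ w, max (inner ℝ w x : ℝ) 0 * max (inner ℝ w y : ℝ) 0 ∂(stdGaussian p)
      = kappa1 (inner ℝ x y : ℝ) := by
  set i₀ : Fin p := ⟨0, by omega⟩ with hi₀
  set i₁ : Fin p := ⟨1, by omega⟩ with hi₁
  have hne : i₀ ≠ i₁ := by simp [hi₀, hi₁, Fin.ext_iff]
  set u : ℝ := inner ℝ x y with hu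
  set s : ℝ := √(1 - u ^ 2) with hs
  have huabs : |u| ≤ 1 := by
    have h := abs_real_inner_le_norm x y
    rwa [hx, hy, one_mul] at h
  have hu1 : -1 ≤ u := neg_le_of_abs_le huabs
  have hu2 : u ≤ 1 := le_of_abs_le huabs
  obtain ⟨B, hB0, hyy⟩ := exists_good_basis p x y hx hy i₀ i₁ hne
  have h1 : ∀ w : EuclideanSpace ℝ (Fin p), (inner ℝ w x : ℝ) = B.repr w i₀ := by
    intro w
    rw [B.repr_apply_apply, hB0, real_inner_comm]
  have h2 : ∀ w : EuclideanSpace ℝ (Fin p),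
      (inner ℝ w y : ℝ) = u * B.repr w i₀ + s * B.repr w i₁ := by
    intro w
    rw [B.repr_apply_apply, B.repr_apply_apply, hB0]
    calc (inner ℝ w y : ℝ) = (inner ℝ w (u • x + s • B i₁) : ℝ) := by rw [← hyy]
      _ = u * (inner ℝ x w : ℝ) + s * (inner ℝ (B i₁) w : ℝ) := by
          rw [inner_add_right, real_inner_smul_right, real_inner_smul_right,
            real_inner_comm x w, real_inner_comm (B i₁) w]
  have hg : Continuous fun v : EuclideanSpace ℝ (Fin p) =>
      max (v i₀) 0 * max (u * v i₀ + s * v i₁) 0 := by fun_prop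
  have mp : MeasurePreserving (⇑B.repr) (stdGaussian p) (stdGaussian p) :=
    ⟨B.repr.toMeasurableEquiv.measurable, stdGaussian_map_isometry p B.repr⟩
  have step1 : ∫ w, max (inner ℝ w x : ℝ) 0 * max (inner ℝ w y : ℝ) 0 ∂(stdGaussian p)
      = ∫ v, max (v i₀) 0 * max (u * v i₀ + s * v i₁) 0 ∂(stdGaussian p) := by
    rw [← mp.integral_comp B.repr.toMeasurableEquiv.measurableEmbedding
      (fun v : EuclideanSpace ℝ (Fin p) => max (v i₀) 0 * max (u * v i₀ + s * v i₁) 0)]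
    simp_rw [h1, h2]
  have step2 : ∫ v, max (v i₀) 0 * max (u * v i₀ + s * v i₁) 0 ∂(stdGaussian p)
      = ∫ v : Fin p → ℝ, max (v i₀) 0 * max (u * v i₀ + s * v i₁) 0
          ∂(Measure.pi fun _ : Fin p => gaussianReal 0 1) := by
    rw [_root_.stdGaussian, MeasureTheory.integral_map_equiv]
    rfl
  have step3 : ∫ v : Fin p → ℝ, max (v i₀) 0 * max (u * v i₀ + s * v i₁) 0
          ∂(Measure.pi fun _ : Fin p => gaussianReal 0 1)
      = ∫ q : ℝ × ℝ, max q.1 0 * max (u * q.1 + s * q.2) 0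
          ∂((gaussianReal 0 1).prod (gaussianReal 0 1)) := by
    rw [← pi_map_pair p i₀ i₁ hne]
    rw [integral_map (((measurable_pi_apply i₀).prodMk (measurable_pi_apply i₁)).aemeasurable)
      (Continuous.aestronglyMeasurable (by fun_prop))]
  rw [step1, step2, step3, hs, gaussian2D u hu1 hu2]
  ring
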